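/- arXiv:0901.2194 — 6 statements merged into one kernel-verified Lean document; each statement's English description precedes it below -/
import Mathlib

section
/- The function r(p) defined piecewise as: r(p) = log2(1 + h11·p) if r2 ≤ log2(1 + h21·p2/(1 + h11·p)); r(p) = log2(1 + h11·p + h21·p2) − r2 if log2(1 + h21·p2/(1+h11·p)) < r2 ≤ log2(1 + h21·p2); and r(p) = log2(1 + h11·p/(1 + h21·p2)) if r2 > log2(1 + h21·p2), is a concave function of p on [0, ∞). -/
open Real Set

lemma aux_concave (a c : ℝ) (ha : 0 < a) (hc : 1 ≤ c) :
    ConcaveOn ℝ (Set.Ici (0:ℝ)) (fun p => Real.logb 2 (c + a * p)) := by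
  have hlog : ConcaveOn ℝ (Ioi (0:ℝ)) Real.log := strictConcaveOn_log_Ioi.concaveOn
  set g : ℝ →ᵃ[ℝ] ℝ := AffineMap.lineMap c (c + a) with hg
  have hcomp : ConcaveOn ℝ (g ⁻¹' Ioi 0) (Real.log ∘ g) := hlog.comp_affineMap g
  have hsub : Set.Ici (0:ℝ) ⊆ g ⁻¹' Ioi 0 := by
    intro p hp
    simp only [mem_preimage, hg, AffineMap.lineMap_apply_module', mem_Ioi, smul_eq_mul]
    have : 0 ≤ a * p := mul_nonneg ha.le hp
    nlinarith [mul_nonneg hp ha.le]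
  have h2 : ConcaveOn ℝ (Set.Ici (0:ℝ)) (Real.log ∘ g) := hcomp.subset hsub (convex_Ici 0)
  have h3 := h2.smul (c := (Real.log 2)⁻¹) (by positivity)
  refine h3.congr fun p hp => ?_
  simp only [Pi.smul_apply, Function.comp_apply, hg, AffineMap.lineMap_apply_module', smul_eq_mul]
  rw [Real.logb, div_eq_inv_mul]
  ring_nf

/-- The piecewise rate function of user 1 with opportunistic multiuser detection
is concave on [0, ∞). -/
theorem stmt_0 (h11 h21 p2 r2 : ℝ) (hh11 : 0 < h11) (hh21 : 0 < h21)
    (hp2 : 0 ≤ p2) (hr2 : 0 ≤ r2) :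
    ConcaveOn ℝ (Set.Ici (0:ℝ)) (fun p =>
      if r2 ≤ Real.logb 2 (1 + h21 * p2 / (1 + h11 * p)) then
        Real.logb 2 (1 + h11 * p)
      else if r2 ≤ Real.logb 2 (1 + h21 * p2) then
        Real.logb 2 (1 + h11 * p + h21 * p2) - r2
      else
        Real.logb 2 (1 + h11 * p / (1 + h21 * p2))) := by
  set A := h21 * p2 with hA
  have hA0 : 0 ≤ A := mul_nonneg hh21.le hp2
  by_cases hcase : r2 ≤ Real.logb 2 (1 + A)
  · -- function = min (logb 2 (1 + h11 p)) (logb 2 (1 + h11 p + A) - r2)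
    have hf1 : ConcaveOn ℝ (Set.Ici (0:ℝ)) (fun p => Real.logb 2 (1 + h11 * p)) :=
      aux_concave h11 1 hh11 le_rfl
    have hf2 : ConcaveOn ℝ (Set.Ici (0:ℝ))
        (fun p => Real.logb 2 (1 + h11 * p + A) - r2) := by
      have := (aux_concave h11 (1 + A) hh11 (by linarith)).sub
        (convexOn_const r2 (convex_Ici 0))
      refine this.congr fun p hp => ?_
      simp only [Pi.sub_apply]
      ring_nf
    have hmin : ConcaveOn ℝ (Set.Ici (0:ℝ))
        (fun p => min (Real.logb 2 (1 + h11 * p)) (Real.logb 2 (1 + h11 * p + A) - r2)) :=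
      hf1.inf hf2
    refine hmin.congr fun p hp => ?_
    have hp0 : (0:ℝ) ≤ p := hp
    have hpos : (0:ℝ) < 1 + h11 * p := by nlinarith
    have hposA : (0:ℝ) < 1 + h11 * p + A := by linarith
    have hkey : Real.logb 2 (1 + A / (1 + h11 * p))
        = Real.logb 2 (1 + h11 * p + A) - Real.logb 2 (1 + h11 * p) := by
      rw [show 1 + A / (1 + h11 * p) = (1 + h11 * p + A) / (1 + h11 * p) by
        field_simp]
      exact Real.logb_div (by positivity) (by positivity)
    split_ifs with h1
    · have h12 : Real.logb 2 (1 + h11 * p)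
          ≤ Real.logb 2 (1 + h11 * p + A) - r2 := by linarith [hkey]
      exact min_eq_left h12
    · have h21' : Real.logb 2 (1 + h11 * p + A) - r2
          ≤ Real.logb 2 (1 + h11 * p) := by linarith [hkey]
      exact min_eq_right h21'
  · -- function = logb 2 (1 + (h11/(1+A)) * p)
    have hA1 : (0:ℝ) < 1 + A := by linarith
    have := aux_concave (h11 / (1 + A)) 1 (by positivity) le_rfl
    refine this.congr fun p hp => ?_
    have hp0 : (0:ℝ) ≤ p := hp
    have hpos : (0:ℝ) < 1 + h11 * p := by nlinarith
    have hc1 : ¬ r2 ≤ Real.logb 2 (1 + A / (1 + h11 * p)) := by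
      intro h
      apply hcase
      refine h.trans (Real.logb_le_logb_of_le one_lt_two (by positivity) ?_)
      have : A / (1 + h11 * p) ≤ A := div_le_self hA0 (by nlinarith)
      linarith
    rw [if_neg hc1, if_neg hcase]
    congr 1
    beta_reduce
    rw [div_mul_eq_mul_div]
end

section
/- If r2 < log2(1 + h21·p2), then r(p) = min( log2(1 + h11·p), log2(1 + h11·p + h21·p2) − r2 ) for all p ≥ 0, where r(p) is user 1's rate function with opportunistic multiuser detection. -/
/-- If r2 < log2(1 + h21 p2), the rate function equals the minimum of the
successive-decoding and joint-decoding rates for all p ≥ 0. -/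
theorem stmt_2 (h11 h21 p2 r2 : ℝ) (hh11 : 0 < h11) (hh21 : 0 < h21)
    (hp2 : 0 < p2) (hr2 : 0 ≤ r2) (hlt : r2 < Real.logb 2 (1 + h21 * p2))
    (r : ℝ → ℝ)
    (hr : r = fun p =>
      if r2 ≤ Real.logb 2 (1 + h21 * p2 / (1 + h11 * p)) then
        Real.logb 2 (1 + h11 * p)
      else if r2 ≤ Real.logb 2 (1 + h21 * p2) then
        Real.logb 2 (1 + h11 * p + h21 * p2) - r2
      else
        Real.logb 2 (1 + h11 * p / (1 + h21 * p2))) :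
    ∀ p, 0 ≤ p →
      r p = min (Real.logb 2 (1 + h11 * p))
                (Real.logb 2 (1 + h11 * p + h21 * p2) - r2) := by
  intro p hp
  have hd : (0:ℝ) < 1 + h11 * p := by positivity
  have hkey : Real.logb 2 (1 + h21 * p2 / (1 + h11 * p)) =
      Real.logb 2 (1 + h11 * p + h21 * p2) - Real.logb 2 (1 + h11 * p) := by
    rw [← Real.logb_div (by positivity) (ne_of_gt hd)]
    congr 1
    field_simp
  subst hr
  simp only
  by_cases hc : r2 ≤ Real.logb 2 (1 + h21 * p2 / (1 + h11 * p))
  · rw [if_pos hc, min_eq_left]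
    rw [hkey] at hc
    linarith
  · rw [if_neg hc, if_pos hlt.le, min_eq_right]
    rw [hkey] at hc
    push_neg at hc
    linarith
end

section
/- Let a(p) = min(f_λ(p), h_λ(p)) where f_λ(p) = log2(1+h11p) − λp and h_λ(p) = log2(1+h11p+h21p2) − r2 − λp, with 0 < r2 < log2(1+h21p2). If p_th ≥ p^{(f)}, then a attains its maximum over p ≥ 0 at p^{(f)}, where p_th = (1/h11)(h21p2/(2^{r2}−1) − 1) and p^{(f)} = max(0, 1/((ln2)λ) − 1/h11). -/
/-- Case p_th ≥ p^{(f)}: a = min(f_λ, h_λ) attains its maximum over p ≥ 0 at p^{(f)}. -/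
theorem stmt_6 (lam h11 h21 p2 r2 : ℝ) (hlam : 0 < lam) (hh11 : 0 < h11)
    (hh21 : 0 < h21) (hp2 : 0 < p2) (hr2 : 0 < r2)
    (hlt : r2 < Real.logb 2 (1 + h21 * p2))
    (pth pf : ℝ)
    (hpth : pth = (1 / h11) * (h21 * p2 / (2 ^ r2 - 1) - 1))
    (hpf : pf = max 0 (1 / (Real.log 2 * lam) - 1 / h11))
    (hcase : pf ≤ pth) :
    IsMaxOn (fun p => min (Real.logb 2 (1 + h11 * p) - lam * p)
        (Real.logb 2 (1 + h11 * p + h21 * p2) - r2 - lam * p))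
      (Set.Ici (0:ℝ)) pf := by
  have hL : 0 < Real.log 2 := Real.log_pos (by norm_num)
  have hpf0 : 0 ≤ pf := by rw [hpf]; exact le_max_left _ _
  have hpfpos : (0:ℝ) < 1 + h11 * pf := by nlinarith
  -- 2^r2 > 1
  have ht1 : (1:ℝ) < 2 ^ r2 := by
    have := (Real.rpow_lt_rpow_left_iff (by norm_num : (1:ℝ) < 2)).mpr hr2
    simpa using this
  -- key inequality from pf ≤ pth : (2^r2 - 1)*(1+h11*pf) ≤ h21*p2
  have hkey : (2 ^ r2 - 1) * (1 + h11 * pf) ≤ h21 * p2 := by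
    have ht0 : (0:ℝ) < 2 ^ r2 - 1 := by linarith
    have h1 : h11 * pf ≤ h21 * p2 / (2 ^ r2 - 1) - 1 := by
      have := mul_le_mul_of_nonneg_left hcase (le_of_lt hh11)
      rw [hpth] at this
      calc h11 * pf ≤ h11 * ((1 / h11) * (h21 * p2 / (2 ^ r2 - 1) - 1)) := this
        _ = h21 * p2 / (2 ^ r2 - 1) - 1 := by field_simp
    have h2 : 1 + h11 * pf ≤ h21 * p2 / (2 ^ r2 - 1) := by linarith
    calc (2 ^ r2 - 1) * (1 + h11 * pf) ≤ (2 ^ r2 - 1) * (h21 * p2 / (2 ^ r2 - 1)) :=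
          mul_le_mul_of_nonneg_left h2 (le_of_lt ht0)
      _ = h21 * p2 := by field_simp
  -- f(pf) ≤ h(pf)
  have hfh : Real.logb 2 (1 + h11 * pf) - lam * pf ≤
      Real.logb 2 (1 + h11 * pf + h21 * p2) - r2 - lam * pf := by
    have hmul : 2 ^ r2 * (1 + h11 * pf) ≤ 1 + h11 * pf + h21 * p2 := by nlinarith
    have hpos : (0:ℝ) < 2 ^ r2 * (1 + h11 * pf) := by positivity
    have hle : Real.logb 2 (2 ^ r2 * (1 + h11 * pf)) ≤
        Real.logb 2 (1 + h11 * pf + h21 * p2) :=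
      Real.logb_le_logb_of_le (by norm_num) hpos hmul
    rw [Real.logb_mul (by positivity) (ne_of_gt hpfpos),
        Real.logb_rpow (by norm_num) (by norm_num)] at hle
    linarith
  -- f(p) ≤ f(pf) for all p ≥ 0
  have hfmax : ∀ p : ℝ, 0 ≤ p →
      Real.logb 2 (1 + h11 * p) - lam * p ≤ Real.logb 2 (1 + h11 * pf) - lam * pf := by
    intro p hp
    have hppos : (0:ℝ) < 1 + h11 * p := by nlinarith
    have hlog : Real.log (1 + h11 * p) - Real.log (1 + h11 * pf) ≤
        (1 + h11 * p) / (1 + h11 * pf) - 1 := by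
      have := Real.log_le_sub_one_of_pos (div_pos hppos hpfpos)
      rwa [Real.log_div (ne_of_gt hppos) (ne_of_gt hpfpos)] at this
    rcases le_or_gt (1 / (Real.log 2 * lam)) (1 / h11) with hc | hc
    · -- pf = 0
      have hpf0' : pf = 0 := by rw [hpf, max_eq_left]; linarith
      have hcoef : h11 ≤ Real.log 2 * lam := by
        have hb : (0:ℝ) < Real.log 2 * lam := by positivity
        rw [div_le_div_iff₀ hb hh11] at hc
        linarith
      have h1 : Real.log (1 + h11 * p) ≤ h11 * p := by
        have := Real.log_le_sub_one_of_pos hppos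
        linarith
      have h2 : Real.log (1 + h11 * p) ≤ Real.log 2 * lam * p := by nlinarith
      rw [hpf0']
      simp only [mul_zero, add_zero, Real.logb_one]
      have h3 : Real.logb 2 (1 + h11 * p) ≤ lam * p := by
        rw [Real.logb, div_le_iff₀ hL]; nlinarith
      linarith
    · -- pf = 1/(log 2 * lam) - 1/h11 > 0
      have hpfv : pf = 1 / (Real.log 2 * lam) - 1 / h11 := by
        rw [hpf, max_eq_right]; linarith
      have hB : 1 + h11 * pf = h11 / (Real.log 2 * lam) := by
        rw [hpfv]; field_simp; ring
      have hq : (1 + h11 * p) / (1 + h11 * pf) - 1 = Real.log 2 * lam * (p - pf) := by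
        rw [hB, hpfv]; field_simp; ring
      have hlog2 : Real.log (1 + h11 * p) - Real.log (1 + h11 * pf) ≤
          Real.log 2 * (lam * (p - pf)) := by rw [hq] at hlog; linarith [hlog]; 
      rw [Real.logb, Real.logb]
      have h4 : (Real.log (1 + h11 * p) - Real.log (1 + h11 * pf)) / Real.log 2
          ≤ lam * (p - pf) := by
        rw [div_le_iff₀ hL]; nlinarith
      rw [sub_div] at h4
      nlinarith
  -- conclude
  intro p hp
  simp only [Set.mem_Ici] at hp
  simp only [Set.mem_setOf_eq]
  have hmin : min (Real.logb 2 (1 + h11 * pf) - lam * pf)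
      (Real.logb 2 (1 + h11 * pf + h21 * p2) - r2 - lam * pf)
      = Real.logb 2 (1 + h11 * pf) - lam * pf := min_eq_left hfh
  calc min (Real.logb 2 (1 + h11 * p) - lam * p)
        (Real.logb 2 (1 + h11 * p + h21 * p2) - r2 - lam * p)
      ≤ Real.logb 2 (1 + h11 * p) - lam * p := min_le_left _ _
    _ ≤ Real.logb 2 (1 + h11 * pf) - lam * pf := hfmax p hp
    _ = _ := hmin.symm
end

section
/- Under the same setup, if p_th ≤ p^{(h)} where p^{(h)} = max(0, 1/((ln2)λ) − (1+h21p2)/h11), then a(p) = min(f_λ(p), h_λ(p)) attains its maximum over p ≥ 0 at p^{(h)}. -/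
set_option maxHeartbeats 1000000 in
/-- Case p_th ≤ p^{(h)}: a = min(f_λ, h_λ) attains its maximum over p ≥ 0 at p^{(h)}. -/
theorem stmt_7 (lam h11 h21 p2 r2 : ℝ) (hlam : 0 < lam) (hh11 : 0 < h11)
    (hh21 : 0 < h21) (hp2 : 0 < p2) (hr2 : 0 < r2)
    (hlt : r2 < Real.logb 2 (1 + h21 * p2))
    (pth ph : ℝ)
    (hpth : pth = (1 / h11) * (h21 * p2 / (2 ^ r2 - 1) - 1))
    (hph : ph = max 0 (1 / (Real.log 2 * lam) - (1 + h21 * p2) / h11))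
    (hcase : pth ≤ ph) :
    IsMaxOn (fun p => min (Real.logb 2 (1 + h11 * p) - lam * p)
        (Real.logb 2 (1 + h11 * p + h21 * p2) - r2 - lam * p))
      (Set.Ici (0:ℝ)) ph := by
  rw [isMaxOn_iff]
  intro p hp
  simp only [Set.mem_Ici] at hp
  have hL : 0 < Real.log 2 := Real.log_pos (by norm_num)
  have hph0 : 0 ≤ ph := by rw [hph]; exact le_max_left 0 _
  set c : ℝ := 1 + h21 * p2 with hc
  clear_value c
  have hc1 : 1 < c := by nlinarith
  have hd1 : 0 < c + h11 * ph := by nlinarith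
  have hd2 : 0 < c + h11 * p := by nlinarith
  have h1p : 0 < 1 + h11 * ph := by nlinarith
  have hE1 : (1:ℝ) < 2 ^ r2 :=
    (Real.one_lt_rpow_iff_of_pos (by norm_num)).2 (Or.inl ⟨by norm_num, hr2⟩)
  have hE0 : (0:ℝ) < 2 ^ r2 - 1 := by linarith
  -- Step A: h(ph) ≤ f(ph)
  have hA : Real.logb 2 (1 + h11 * ph + h21 * p2) - r2 - lam * ph ≤
      Real.logb 2 (1 + h11 * ph) - lam * ph := by
    have h2 : h21 * p2 / (2 ^ r2 - 1) - 1 ≤ h11 * ph := by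
      have heq : h21 * p2 / (2 ^ r2 - 1) - 1 = h11 * pth := by
        rw [hpth]; field_simp
      rw [heq]; exact mul_le_mul_of_nonneg_left hcase hh11.le
    have hkey : h21 * p2 ≤ (2 ^ r2 - 1) * (1 + h11 * ph) := by
      have h3 : h21 * p2 / (2 ^ r2 - 1) ≤ 1 + h11 * ph := by linarith
      calc h21 * p2 = (h21 * p2 / (2 ^ r2 - 1)) * (2 ^ r2 - 1) := by field_simp
        _ ≤ (1 + h11 * ph) * (2 ^ r2 - 1) := mul_le_mul_of_nonneg_right h3 hE0.le
        _ = (2 ^ r2 - 1) * (1 + h11 * ph) := by ring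
    have hle : 1 + h11 * ph + h21 * p2 ≤ 2 ^ r2 * (1 + h11 * ph) := by nlinarith
    have hpos : (0:ℝ) < 1 + h11 * ph + h21 * p2 := by nlinarith
    have hlog : Real.logb 2 (1 + h11 * ph + h21 * p2) ≤
        Real.logb 2 (2 ^ r2 * (1 + h11 * ph)) :=
      Real.logb_le_logb_of_le (by norm_num) hpos hle
    rw [Real.logb_mul (by positivity) (ne_of_gt h1p), Real.logb_rpow (by norm_num) (by norm_num)] at hlog
    linarith
  -- Step B: h(p) ≤ h(ph)
  have hB : Real.logb 2 (c + h11 * p) - lam * p ≤ Real.logb 2 (c + h11 * ph) - lam * ph := by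
    have hlog : Real.log (c + h11 * p) - Real.log (c + h11 * ph) ≤
        (c + h11 * p) / (c + h11 * ph) - 1 := by
      have h := Real.log_le_sub_one_of_pos (div_pos hd2 hd1)
      rwa [Real.log_div (ne_of_gt hd2) (ne_of_gt hd1)] at h
    have hkey : Real.log (c + h11 * p) - Real.log (c + h11 * ph) ≤
        Real.log 2 * lam * (p - ph) := by
      rcases le_or_gt (1 / (Real.log 2 * lam) - c / h11) 0 with hX | hX
      · have hph' : ph = 0 := by rw [hph, max_eq_left hX]
        have hLl : 0 < Real.log 2 * lam := by positivity
        have hineq : h11 ≤ Real.log 2 * lam * c := by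
          rw [sub_nonpos, div_le_div_iff₀ hLl hh11] at hX
          nlinarith
        have hc0 : (0:ℝ) < c := by linarith
        have h7 : (c + h11 * p) / (c + h11 * ph) - 1 ≤ Real.log 2 * lam * (p - ph) := by
          rw [hph']
          simp only [mul_zero, add_zero, sub_zero]
          rw [div_sub_one hc0.ne', div_le_iff₀ hc0]
          nlinarith
        linarith
      · have hph' : ph = 1 / (Real.log 2 * lam) - c / h11 := by
          rw [hph, max_eq_right hX.le]
        have hLl : 0 < Real.log 2 * lam := by positivity
        have hden : c + h11 * ph = h11 / (Real.log 2 * lam) := by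
          rw [hph']; field_simp; ring
        have h7 : (c + h11 * p) / (c + h11 * ph) - 1 = Real.log 2 * lam * (p - ph) := by
          rw [hden, hph']; field_simp; ring
        linarith
    have h5 : (Real.log (c + h11 * p) - Real.log (c + h11 * ph)) / Real.log 2 ≤
        lam * (p - ph) := by
      rw [div_le_iff₀ hL]; nlinarith
    have h6 : Real.logb 2 (c + h11 * p) - Real.logb 2 (c + h11 * ph) ≤ lam * (p - ph) := by
      rw [Real.logb, Real.logb, div_sub_div_same]; exact h5
    linarith
  have hcomm : ∀ x : ℝ, 1 + h11 * x + h21 * p2 = c + h11 * x := by intro x; rw [hc]; ring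
  have hA' : Real.logb 2 (c + h11 * ph) - r2 - lam * ph ≤
      Real.logb 2 (1 + h11 * ph) - lam * ph := by
    rw [← hcomm]; exact hA
  simp only [hcomm]
  rw [min_eq_right hA']
  exact le_trans (min_le_right _ _) (by linarith)
end

section
/- Under the same setup, if p^{(h)} < p_th < p^{(f)}, then a(p) = min(f_λ(p), h_λ(p)) attains its maximum over p ≥ 0 at p = p_th, and moreover f_λ(p_th) = h_λ(p_th). -/
set_option maxHeartbeats 1000000

/-- Case p^{(h)} < p_th < p^{(f)}: a = min(f_λ, h_λ) attains its maximum over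
p ≥ 0 at p_th, where also f_λ(p_th) = h_λ(p_th). -/
theorem stmt_8 (lam h11 h21 p2 r2 : ℝ) (hlam : 0 < lam) (hh11 : 0 < h11)
    (hh21 : 0 < h21) (hp2 : 0 < p2) (hr2 : 0 < r2)
    (hlt : r2 < Real.logb 2 (1 + h21 * p2))
    (pth pf ph : ℝ)
    (hpth : pth = (1 / h11) * (h21 * p2 / (2 ^ r2 - 1) - 1))
    (hpf : pf = max 0 (1 / (Real.log 2 * lam) - 1 / h11))
    (hph : ph = max 0 (1 / (Real.log 2 * lam) - (1 + h21 * p2) / h11))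
    (hcase1 : ph < pth) (hcase2 : pth < pf) :
    IsMaxOn (fun p => min (Real.logb 2 (1 + h11 * p) - lam * p)
        (Real.logb 2 (1 + h11 * p + h21 * p2) - r2 - lam * p))
      (Set.Ici (0:ℝ)) pth ∧
    Real.logb 2 (1 + h11 * pth) - lam * pth =
      Real.logb 2 (1 + h11 * pth + h21 * p2) - r2 - lam * pth := by
  have hL : 0 < Real.log 2 := Real.log_pos (by norm_num)
  have hcpos : 0 < h21 * p2 := mul_pos hh21 hp2
  set c := h21 * p2 with hc
  have hBpos : (0:ℝ) < 2 ^ r2 - 1 := by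
    have h1 : (1:ℝ) < 2 ^ r2 :=
      (Real.one_lt_rpow_iff_of_pos (by norm_num)).2 (Or.inl ⟨by norm_num, hr2⟩)
    linarith
  have hpth' : 1 + h11 * pth = c / (2 ^ r2 - 1) := by
    rw [hpth]; field_simp; ring
  have hphge : 0 ≤ ph := hph ▸ le_max_left _ _
  have hpthpos : 0 < pth := lt_of_le_of_lt hphge hcase1
  have hpf' : pth < 1 / (Real.log 2 * lam) - 1 / h11 := by
    rcases le_or_gt (1 / (Real.log 2 * lam) - 1 / h11) 0 with h | h
    · exfalso; rw [hpf, max_eq_left h] at hcase2; linarith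
    · rw [hpf, max_eq_right h.le] at hcase2; exact hcase2
  have hph' : 1 / (Real.log 2 * lam) - (1 + c) / h11 < pth :=
    lt_of_le_of_lt (hph ▸ le_max_right _ _) hcase1
  have h3 : 0 < Real.log 2 * lam := by positivity
  -- monotonicity of f on [0, pf']
  have monoF : ∀ x y : ℝ, 0 ≤ x → x ≤ y → y ≤ 1 / (Real.log 2 * lam) - 1 / h11 →
      Real.logb 2 (1 + h11 * x) - lam * x ≤ Real.logb 2 (1 + h11 * y) - lam * y := by
    intro x y hx hxy hy
    have hax : 0 < 1 + h11 * x := by nlinarith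
    have hay : 0 < 1 + h11 * y := by nlinarith
    have hLl : Real.log 2 * lam * (1 + h11 * y) ≤ h11 := by
      have h4 : y + 1 / h11 ≤ 1 / (Real.log 2 * lam) := by linarith
      have h5 : Real.log 2 * lam * (y + 1 / h11) ≤
          Real.log 2 * lam * (1 / (Real.log 2 * lam)) :=
        mul_le_mul_of_nonneg_left h4 h3.le
      have h6 : Real.log 2 * lam * (1 / (Real.log 2 * lam)) = 1 := by field_simp
      have h7 : h11 * (Real.log 2 * lam * (y + 1 / h11)) =
          Real.log 2 * lam * (1 + h11 * y) := by field_simp; ring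
      nlinarith [h5, h6]
    have hkey : Real.log 2 * lam * (y - x) ≤
        Real.log (1 + h11 * y) - Real.log (1 + h11 * x) := by
      have h1 : Real.log ((1 + h11 * x) / (1 + h11 * y)) ≤
          (1 + h11 * x) / (1 + h11 * y) - 1 :=
        Real.log_le_sub_one_of_pos (by positivity)
      rw [Real.log_div hax.ne' hay.ne'] at h1
      have h8 : 1 - (1 + h11 * x) / (1 + h11 * y) = h11 * (y - x) / (1 + h11 * y) := by
        field_simp; ring
      have h2 : Real.log 2 * lam * (y - x) ≤ 1 - (1 + h11 * x) / (1 + h11 * y) := by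
        rw [h8, le_div_iff₀ hay]
        nlinarith [hLl, hxy]
      linarith
    have hgoal : lam * (y - x) ≤
        Real.logb 2 (1 + h11 * y) - Real.logb 2 (1 + h11 * x) := by
      rw [Real.logb, Real.logb, div_sub_div_same, le_div_iff₀ hL]
      nlinarith
    linarith
  -- antitonicity of h on [ph', ∞) ∩ [0, ∞)
  have monoH : ∀ x y : ℝ, 0 ≤ x → 1 / (Real.log 2 * lam) - (1 + c) / h11 ≤ x → x ≤ y →
      Real.logb 2 (1 + h11 * y + c) - lam * y ≤ Real.logb 2 (1 + h11 * x + c) - lam * x := by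
    intro x y hx hphx hxy
    have hax : 0 < 1 + h11 * x + c := by nlinarith
    have hay : 0 < 1 + h11 * y + c := by nlinarith
    have hLl : h11 ≤ Real.log 2 * lam * (1 + h11 * x + c) := by
      have h4 : 1 / (Real.log 2 * lam) ≤ x + (1 + c) / h11 := by linarith
      have h5 : Real.log 2 * lam * (1 / (Real.log 2 * lam)) ≤
          Real.log 2 * lam * (x + (1 + c) / h11) :=
        mul_le_mul_of_nonneg_left h4 h3.le
      have h6 : Real.log 2 * lam * (1 / (Real.log 2 * lam)) = 1 := by field_simp
      have h7 : h11 * (Real.log 2 * lam * (x + (1 + c) / h11)) =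
          Real.log 2 * lam * (1 + h11 * x + c) := by field_simp; ring
      nlinarith [h5, h6]
    have hkey : Real.log (1 + h11 * y + c) - Real.log (1 + h11 * x + c) ≤
        Real.log 2 * lam * (y - x) := by
      have h1 : Real.log ((1 + h11 * y + c) / (1 + h11 * x + c)) ≤
          (1 + h11 * y + c) / (1 + h11 * x + c) - 1 :=
        Real.log_le_sub_one_of_pos (by positivity)
      rw [Real.log_div hay.ne' hax.ne'] at h1
      have h8 : (1 + h11 * y + c) / (1 + h11 * x + c) - 1 =
          h11 * (y - x) / (1 + h11 * x + c) := by field_simp; ring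
      have h2 : h11 * (y - x) / (1 + h11 * x + c) ≤ Real.log 2 * lam * (y - x) := by
        rw [div_le_iff₀ hax]
        nlinarith [hLl, hxy]
      linarith [h1, h8 ▸ h1, h2]
    have hgoal : Real.logb 2 (1 + h11 * y + c) - Real.logb 2 (1 + h11 * x + c) ≤
        lam * (y - x) := by
      rw [Real.logb, Real.logb, div_sub_div_same, div_le_iff₀ hL]
      nlinarith
    linarith
  have hapth : 0 < 1 + h11 * pth := by nlinarith
  -- equality at pth
  have heqpt : 1 + h11 * pth + c = (1 + h11 * pth) * 2 ^ r2 := by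
    have hcc : c = (2 ^ r2 - 1) * (1 + h11 * pth) := by
      rw [hpth']; field_simp
    rw [hcc]; ring
  have heq : Real.logb 2 (1 + h11 * pth) - lam * pth =
      Real.logb 2 (1 + h11 * pth + c) - r2 - lam * pth := by
    rw [heqpt, Real.logb_mul hapth.ne' (by positivity), Real.logb_rpow (by norm_num) (by norm_num)]
    ring
  refine ⟨?_, heq⟩
  intro p hp
  simp only [Set.mem_Ici] at hp
  simp only [Set.mem_setOf_eq]
  have hminth : min (Real.logb 2 (1 + h11 * pth) - lam * pth)
      (Real.logb 2 (1 + h11 * pth + c) - r2 - lam * pth)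
      = Real.logb 2 (1 + h11 * pth) - lam * pth := by
    rw [← heq, min_self]
  rw [hminth]
  rcases le_total p pth with hple | hpge
  · exact le_trans (min_le_left _ _) (monoF p pth hp hple hpf'.le)
  · refine le_trans (min_le_right _ _) ?_
    have := monoH pth p hpthpos.le hph'.le hpge
    linarith
end

section
/- Let x* > 0, δ* ≥ 0 satisfy the KKT conditions: x* = 1/((ln2)(μ − δ*)·F(x*)) − ζ, x*·δ* = 0, where F(x) = (1 + h11x)/(1 + h11x + ν h21 p2), ζ = (1+h21p2)/h11, and μ > 0, ν > 0, h11, h21, p2 > 0. If x* > 0 then δ* = 0 and x* is the unique positive root of x = 1/((ln2)μ·F(x)) − ζ; conversely if 1/((ln2)μ·F(0)) − ζ ≤ 0 then x* = 0 satisfies the KKT conditions with some δ* ≥ 0. -/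
/-- KKT conditions for the per-subcarrier subproblem of (P6): a strictly
positive KKT point has zero multiplier and is the unique positive root of the
biased water-filling equation; conversely, if the unconstrained water level is
nonpositive at zero then x = 0 satisfies the KKT conditions with some δ ≥ 0. -/
theorem stmt_19 (h11 h21 p2 mu nu : ℝ) (hh11 : 0 < h11) (hh21 : 0 < h21)
    (hp2 : 0 < p2) (hmu : 0 < mu) (hnu : 0 < nu)
    (F : ℝ → ℝ)
    (hF : F = fun x => (1 + h11 * x) / (1 + h11 * x + nu * (h21 * p2)))
    (zeta : ℝ) (hzeta : zeta = (1 + h21 * p2) / h11) :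
    (∀ xstar dstar : ℝ, 0 < xstar → 0 ≤ dstar → xstar * dstar = 0 →
      xstar = 1 / (Real.log 2 * (mu - dstar) * F xstar) - zeta →
      dstar = 0 ∧ xstar = 1 / (Real.log 2 * mu * F xstar) - zeta ∧
        ∀ y : ℝ, 0 < y → y = 1 / (Real.log 2 * mu * F y) - zeta → y = xstar) ∧
    (1 / (Real.log 2 * mu * F 0) - zeta ≤ 0 →
      ∃ dstar : ℝ, 0 ≤ dstar ∧
        (0:ℝ) = 1 / (Real.log 2 * (mu - dstar) * F 0) - zeta ∧
        (0:ℝ) * dstar = 0) := by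
  have hlog : 0 < Real.log 2 := Real.log_pos (by norm_num)
  set A := nu * (h21 * p2) with hA
  have hApos : 0 < A := by positivity
  have hzpos : 0 < zeta := by rw [hzeta]; positivity
  set L := Real.log 2 with hL
  constructor
  · intro x d hx hd hxd heq
    have hd0 : d = 0 := by
      rcases mul_eq_zero.1 hxd with h | h
      · exact absurd h (ne_of_gt hx)
      · exact h
    subst hd0
    rw [sub_zero] at heq
    refine ⟨rfl, heq, ?_⟩
    intro y hy hyeq
    have hDx : (0:ℝ) < 1 + h11 * x := by positivity
    have hDy : (0:ℝ) < 1 + h11 * y := by positivity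
    have hDx' : (1 + h11 * x) ≠ 0 := ne_of_gt hDx
    have hDy' : (1 + h11 * y) ≠ 0 := ne_of_gt hDy
    have hDxA : (1 + h11 * x + A) ≠ 0 := by positivity
    have hDyA : (1 + h11 * y + A) ≠ 0 := by positivity
    have hLmu : L * mu ≠ 0 := by positivity
    have ex : (x + zeta) * (L * mu * (1 + h11 * x)) = 1 + h11 * x + A := by
      have h1 := heq
      rw [hF] at h1
      simp only [] at h1
      field_simp at h1
      linarith
    have ey : (y + zeta) * (L * mu * (1 + h11 * y)) = 1 + h11 * y + A := by
      have h1 := hyeq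
      rw [hF] at h1
      simp only [] at h1
      field_simp at h1
      linarith
    have hkey : (y - x) * (L * mu * (1 + h11 * x) * (1 + h11 * y) + A * h11) = 0 := by
      linear_combination (1 + h11 * x) * ey - (1 + h11 * y) * ex
    have hpos : 0 < L * mu * (1 + h11 * x) * (1 + h11 * y) + A * h11 := by positivity
    have := mul_eq_zero.1 hkey
    rcases this with h | h
    · linarith
    · exact absurd h (ne_of_gt hpos)
  · intro hcond
    refine ⟨mu - (1 + A) / (zeta * L), ?_, ?_, by ring⟩
    · have hF0 : F 0 = 1 / (1 + A) := by rw [hF]; norm_num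
      rw [hF0] at hcond
      have h1 : 1 / (L * mu * (1 / (1 + A))) = (1 + A) / (L * mu) := by
        field_simp
      rw [h1] at hcond
      have h2 : (1 + A) / (L * mu) ≤ zeta := by linarith
      have h3 : (1 + A) ≤ zeta * (L * mu) := by
        rw [div_le_iff₀ (by positivity)] at h2; linarith [h2]
      have h4 : (1 + A) / (zeta * L) ≤ mu := by
        rw [div_le_iff₀ (by positivity)]; nlinarith
      linarith
    · have hF0 : F 0 = 1 / (1 + A) := by rw [hF]; norm_num
      rw [hF0]
      have : mu - (mu - (1 + A) / (zeta * L)) = (1 + A) / (zeta * L) := by ring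
      rw [this]
      field_simp
      ring
end
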